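/- For every x ∈ (0,1): as ε → 0⁺, r̃(x + iε) + r̃(x − iε) → log(x(1−x)), where log is the real logarithm. -/

import Mathlib

open Complex Metric Filter

/-- `w(z) = z·((z−1)/z)^{1/2}` with the principal square root. -/
noncomputable def wfun (z : ℂ) : ℂ := z * ((z - 1) / z) ^ ((1 : ℂ)/2)

/-- `r̃(z) = −Log(2 + (2z−1)/w(z))` with the principal logarithm. -/
noncomputable def rTilde (z : ℂ) : ℂ := -Complex.log (2 + (2 * z - 1) / wfun z)

lemma key_exp_pos (r : ℝ) (hr : 0 < r) :
    Complex.exp ((↑(Real.log r) + Real.pi * I) * (1/2)) = (Real.sqrt r : ℂ) * I := by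
  have h1 : (↑(Real.log r) + Real.pi * I) * (1/2 : ℂ)
      = ((Real.log r / 2 : ℝ) : ℂ) + ((Real.pi / 2 : ℝ) : ℂ) * I := by
    push_cast; ring
  have hsq : Real.sqrt r = Real.exp (Real.log r / 2) := by
    have : r = (Real.exp (Real.log r / 2)) ^ 2 := by
      rw [sq, ← Real.exp_add, add_halves, Real.exp_log hr]
    conv_lhs => rw [this]
    rw [Real.sqrt_sq (Real.exp_pos _).le]
  rw [h1, Complex.exp_add, Complex.exp_mul_I, ← Complex.ofReal_exp, ← hsq]
  norm_num [Real.cos_pi_div_two, Real.sin_pi_div_two, ← Complex.ofReal_cos,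
    ← Complex.ofReal_sin]

lemma key_exp_neg (r : ℝ) (hr : 0 < r) :
    Complex.exp ((↑(Real.log r) - Real.pi * I) * (1/2)) = -((Real.sqrt r : ℂ) * I) := by
  have h1 : (↑(Real.log r) - Real.pi * I) * (1/2 : ℂ)
      = ((Real.log r / 2 : ℝ) : ℂ) + ((-(Real.pi / 2) : ℝ) : ℂ) * I := by
    push_cast; ring
  have hsq : Real.sqrt r = Real.exp (Real.log r / 2) := by
    have : r = (Real.exp (Real.log r / 2)) ^ 2 := by
      rw [sq, ← Real.exp_add, add_halves, Real.exp_log hr]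
    conv_lhs => rw [this]
    rw [Real.sqrt_sq (Real.exp_pos _).le]
  rw [h1, Complex.exp_add, Complex.exp_mul_I, ← Complex.ofReal_exp, ← hsq]
  norm_num [← Complex.ofReal_cos, ← Complex.ofReal_sin, Real.cos_pi_div_two,
    Real.sin_pi_div_two]

/-- For `x ∈ (0,1)`, as `ε → 0⁺`,
`r̃(x + iε) + r̃(x − iε) → log(x(1−x))` (real logarithm). -/
theorem stmt_11 (x : ℝ) (hx : x ∈ Set.Ioo (0:ℝ) 1) :
    Tendsto (fun ε : ℝ => rTilde ((x : ℂ) + ε * I) + rTilde ((x : ℂ) - ε * I))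
      (nhdsWithin 0 (Set.Ioi 0)) (nhds ((Real.log (x * (1 - x)) : ℂ))) := by
  obtain ⟨hx0, hx1⟩ := hx
  set s : ℝ := Real.sqrt (x * (1 - x)) with hs_def
  have hxx : 0 < x * (1 - x) := mul_pos hx0 (by linarith)
  have hs_pos : 0 < s := Real.sqrt_pos.mpr hxx
  have hs_sq : s ^ 2 = x * (1 - x) := Real.sq_sqrt hxx.le
  set t : ℝ := (2 * x - 1) / s with ht_def
  set r : ℝ := (1 - x) / x with hr_def
  have hr_pos : 0 < r := div_pos (by linarith) hx0
  -- x * sqrt r = s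
  have hxr : x * Real.sqrt r = s := by
    have h1 : r = (s / x) ^ 2 := by
      rw [div_pow, hs_sq, hr_def]; field_simp
    rw [h1, Real.sqrt_sq (div_nonneg hs_pos.le hx0.le)]
    field_simp
  have hxC : ((x : ℂ)) ≠ 0 := by exact_mod_cast hx0.ne'
  set a : ℂ := 2 - (t : ℂ) * I with ha_def
  -- limit point of (z-1)/z
  set c : ℂ := (((x - 1) / x : ℝ) : ℂ) with hc_def
  have hc_re : c.re < 0 := by
    simp only [hc_def, Complex.ofReal_re]
    exact div_neg_of_neg_of_pos (by linarith) hx0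
  have hc_im : c.im = 0 := by simp [hc_def]
  have habs : ‖c‖ = r := by
    rw [hc_def, Complex.norm_real, Real.norm_eq_abs, abs_div, abs_of_neg (by linarith : x - 1 < 0),
      abs_of_pos hx0, hr_def]
    ring
  -- generic machinery for one branch
  have main : ∀ σ : ℝ, σ = 1 ∨ σ = -1 →
      Tendsto (fun ε : ℝ => (((x:ℂ) + (σ*ε) * I - 1) / ((x:ℂ) + (σ*ε) * I)))
        (nhdsWithin 0 (Set.Ioi 0)) (nhds c) := by
    intro σ _
    have hcont : ContinuousAt (fun ε : ℝ => (((x:ℂ) + (σ*ε) * I - 1) / ((x:ℂ) + (σ*ε) * I))) 0 := by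
      apply ContinuousAt.div
      · fun_prop
      · fun_prop
      · simpa using hxC
    have h0 : (((x:ℂ) + (σ*(0:ℝ)) * I - 1) / ((x:ℂ) + (σ*(0:ℝ)) * I)) = c := by
      rw [hc_def]
      push_cast
      ring_nf
    have := hcont.tendsto.mono_left (nhdsWithin_le_nhds (s := Set.Ioi (0:ℝ)))
    rwa [h0] at this
  -- Upper branch --------------------------------------------------------
  have hg_up : Tendsto (fun ε : ℝ => (((x:ℂ) + ε * I - 1) / ((x:ℂ) + ε * I)))
      (nhdsWithin 0 (Set.Ioi 0)) (nhds c) := by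
    have := main 1 (Or.inl rfl)
    simpa using this
  have hg_dn : Tendsto (fun ε : ℝ => (((x:ℂ) - ε * I - 1) / ((x:ℂ) - ε * I)))
      (nhdsWithin 0 (Set.Ioi 0)) (nhds c) := by
    have := main (-1) (Or.inr rfl)
    simpa [neg_mul, sub_eq_add_neg] using this
  have hne_up : ∀ ε : ℝ, 0 < ε → (0:ℝ) < (((x:ℂ) + ε * I - 1) / ((x:ℂ) + ε * I)).im := by
    intro ε hε
    have hw0 : ((x:ℂ) + ε * I) ≠ 0 := by
      intro h
      have : ((x:ℂ) + ε * I).re = 0 := by rw [h]; simp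
      simp at this
      exact hx0.ne' this
    have hN : 0 < Complex.normSq ((x:ℂ) + ε * I) := Complex.normSq_pos.mpr hw0
    have him : (((x:ℂ) + ε * I - 1) / ((x:ℂ) + ε * I)).im
        = ε / Complex.normSq ((x:ℂ) + ε * I) := by
      rw [Complex.div_im]
      simp
      ring
    rw [him]
    positivity
  have hne_dn : ∀ ε : ℝ, 0 < ε → (((x:ℂ) - ε * I - 1) / ((x:ℂ) - ε * I)).im < 0 := by
    intro ε hε
    have hw0 : ((x:ℂ) - ε * I) ≠ 0 := by
      intro h
      have : ((x:ℂ) - ε * I).re = 0 := by rw [h]; simp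
      simp at this
      exact hx0.ne' this
    have hN : 0 < Complex.normSq ((x:ℂ) - ε * I) := Complex.normSq_pos.mpr hw0
    have him : (((x:ℂ) - ε * I - 1) / ((x:ℂ) - ε * I)).im
        = -(ε / Complex.normSq ((x:ℂ) - ε * I)) := by
      rw [Complex.div_im]
      simp
      ring
    rw [him]
    have : 0 < ε / Complex.normSq ((x:ℂ) - ε * I) := by positivity
    linarith
  -- logs along the branches
  have hlog_up : Tendsto (fun ε : ℝ => Complex.log (((x:ℂ) + ε * I - 1) / ((x:ℂ) + ε * I)))
      (nhdsWithin 0 (Set.Ioi 0)) (nhds (↑(Real.log r) + Real.pi * I)) := by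
    have hbase := Complex.tendsto_log_nhdsWithin_im_nonneg_of_re_neg_of_im_zero hc_re hc_im
    rw [habs] at hbase
    refine hbase.comp ?_
    rw [tendsto_nhdsWithin_iff]
    refine ⟨hg_up, ?_⟩
    filter_upwards [self_mem_nhdsWithin] with ε hε
    exact (hne_up ε hε).le
  have hlog_dn : Tendsto (fun ε : ℝ => Complex.log (((x:ℂ) - ε * I - 1) / ((x:ℂ) - ε * I)))
      (nhdsWithin 0 (Set.Ioi 0)) (nhds (↑(Real.log r) - Real.pi * I)) := by
    have hbase := Complex.tendsto_log_nhdsWithin_im_neg_of_re_neg_of_im_zero hc_re hc_im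
    rw [habs] at hbase
    refine hbase.comp ?_
    rw [tendsto_nhdsWithin_iff]
    refine ⟨hg_dn, ?_⟩
    filter_upwards [self_mem_nhdsWithin] with ε hε
    exact hne_dn ε hε
  -- wfun limits
  have hw_up : Tendsto (fun ε : ℝ => wfun ((x:ℂ) + ε * I))
      (nhdsWithin 0 (Set.Ioi 0)) (nhds ((s:ℂ) * I)) := by
    have hexp : Tendsto (fun ε : ℝ =>
        Complex.exp (Complex.log (((x:ℂ) + ε * I - 1) / ((x:ℂ) + ε * I)) * (1/2)))
        (nhdsWithin 0 (Set.Ioi 0)) (nhds ((Real.sqrt r : ℂ) * I)) := by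
      rw [← key_exp_pos r hr_pos]
      exact (Complex.continuous_exp.continuousAt.tendsto).comp (hlog_up.mul_const (1/2))
    have hz : Tendsto (fun ε : ℝ => (x:ℂ) + ε * I) (nhdsWithin 0 (Set.Ioi 0)) (nhds (x:ℂ)) := by
      have : ContinuousAt (fun ε : ℝ => (x:ℂ) + ε * I) 0 := by fun_prop
      simpa using this.tendsto.mono_left nhdsWithin_le_nhds
    have hmul := hz.mul hexp
    have heq : (fun ε : ℝ => wfun ((x:ℂ) + ε * I)) =ᶠ[nhdsWithin 0 (Set.Ioi 0)]
        (fun ε : ℝ => ((x:ℂ) + ε * I) *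
          Complex.exp (Complex.log (((x:ℂ) + ε * I - 1) / ((x:ℂ) + ε * I)) * (1/2))) := by
      filter_upwards [self_mem_nhdsWithin] with ε hε
      have hne : (((x:ℂ) + ε * I - 1) / ((x:ℂ) + ε * I)) ≠ 0 := by
        intro h
        have := hne_up ε hε
        rw [h] at this
        simp at this
      rw [wfun, Complex.cpow_def_of_ne_zero hne]
    rw [tendsto_congr' heq]
    have hxrC : (x:ℂ) * (Real.sqrt r : ℂ) = (s:ℂ) := by exact_mod_cast congrArg Complex.ofReal hxr
    have : (x:ℂ) * ((Real.sqrt r : ℂ) * I) = (s:ℂ) * I := by linear_combination I * hxrC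
    rwa [← this]
  have hw_dn : Tendsto (fun ε : ℝ => wfun ((x:ℂ) - ε * I))
      (nhdsWithin 0 (Set.Ioi 0)) (nhds (-((s:ℂ) * I))) := by
    have hexp : Tendsto (fun ε : ℝ =>
        Complex.exp (Complex.log (((x:ℂ) - ε * I - 1) / ((x:ℂ) - ε * I)) * (1/2)))
        (nhdsWithin 0 (Set.Ioi 0)) (nhds (-((Real.sqrt r : ℂ) * I))) := by
      rw [← key_exp_neg r hr_pos]
      exact (Complex.continuous_exp.continuousAt.tendsto).comp (hlog_dn.mul_const (1/2))
    have hz : Tendsto (fun ε : ℝ => (x:ℂ) - ε * I) (nhdsWithin 0 (Set.Ioi 0)) (nhds (x:ℂ)) := by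
      have : ContinuousAt (fun ε : ℝ => (x:ℂ) - ε * I) 0 := by fun_prop
      simpa using this.tendsto.mono_left nhdsWithin_le_nhds
    have hmul := hz.mul hexp
    have heq : (fun ε : ℝ => wfun ((x:ℂ) - ε * I)) =ᶠ[nhdsWithin 0 (Set.Ioi 0)]
        (fun ε : ℝ => ((x:ℂ) - ε * I) *
          Complex.exp (Complex.log (((x:ℂ) - ε * I - 1) / ((x:ℂ) - ε * I)) * (1/2))) := by
      filter_upwards [self_mem_nhdsWithin] with ε hε
      have hne : (((x:ℂ) - ε * I - 1) / ((x:ℂ) - ε * I)) ≠ 0 := by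
        intro h
        have := hne_dn ε hε
        rw [h] at this
        simp at this
      rw [wfun, Complex.cpow_def_of_ne_zero hne]
    rw [tendsto_congr' heq]
    have hxrC : (x:ℂ) * (Real.sqrt r : ℂ) = (s:ℂ) := by exact_mod_cast congrArg Complex.ofReal hxr
    have : (x:ℂ) * (-((Real.sqrt r : ℂ) * I)) = -((s:ℂ) * I) := by
      linear_combination (-I) * hxrC
    rwa [← this]
  -- the arguments of the outer logarithm
  have hsI : ((s:ℂ) * I) ≠ 0 := by
    simp [Complex.ofReal_ne_zero, hs_pos.ne', I_ne_zero]
  have hts : (t:ℂ) * (s:ℂ) = 2 * (x:ℂ) - 1 := by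
    rw [← Complex.ofReal_mul]
    have : t * s = 2 * x - 1 := by
      rw [ht_def]; field_simp
    rw [this]; push_cast; ring
  have hdiv_up : (2 * (x:ℂ) - 1) / ((s:ℂ) * I) = -((t:ℂ) * I) := by
    rw [div_eq_iff hsI, show -((t:ℂ) * I) * ((s:ℂ) * I) = -((t:ℂ) * (s:ℂ)) * (I * I) by ring,
      Complex.I_mul_I, hts]
    ring
  have hdiv_dn : (2 * (x:ℂ) - 1) / (-((s:ℂ) * I)) = (t:ℂ) * I := by
    rw [div_neg, hdiv_up, neg_neg]
  have hF_up : Tendsto (fun ε : ℝ => 2 + (2 * ((x:ℂ) + ε * I) - 1) / wfun ((x:ℂ) + ε * I))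
      (nhdsWithin 0 (Set.Ioi 0)) (nhds a) := by
    have hnum : Tendsto (fun ε : ℝ => 2 * ((x:ℂ) + ε * I) - 1)
        (nhdsWithin 0 (Set.Ioi 0)) (nhds (2 * (x:ℂ) - 1)) := by
      have : ContinuousAt (fun ε : ℝ => 2 * ((x:ℂ) + ε * I) - 1) 0 := by fun_prop
      simpa using this.tendsto.mono_left nhdsWithin_le_nhds
    have := tendsto_const_nhds (x := (2:ℂ)) (f := nhdsWithin (0:ℝ) (Set.Ioi 0)) |>.add
      (hnum.div hw_up hsI)
    rwa [ha_def, sub_eq_add_neg, ← hdiv_up]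
  have hF_dn : Tendsto (fun ε : ℝ => 2 + (2 * ((x:ℂ) - ε * I) - 1) / wfun ((x:ℂ) - ε * I))
      (nhdsWithin 0 (Set.Ioi 0)) (nhds (2 + (t:ℂ) * I)) := by
    have hnum : Tendsto (fun ε : ℝ => 2 * ((x:ℂ) - ε * I) - 1)
        (nhdsWithin 0 (Set.Ioi 0)) (nhds (2 * (x:ℂ) - 1)) := by
      have : ContinuousAt (fun ε : ℝ => 2 * ((x:ℂ) - ε * I) - 1) 0 := by fun_prop
      simpa using this.tendsto.mono_left nhdsWithin_le_nhds
    have := tendsto_const_nhds (x := (2:ℂ)) (f := nhdsWithin (0:ℝ) (Set.Ioi 0)) |>.add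
      (hnum.div hw_dn (by simpa using hsI))
    rwa [← hdiv_dn]
  -- outer log continuity
  have ha_slit : a ∈ Complex.slitPlane := by
    rw [Complex.mem_slitPlane_iff]
    left
    simp [ha_def]
  have hb_slit : (2 + (t:ℂ) * I) ∈ Complex.slitPlane := by
    rw [Complex.mem_slitPlane_iff]
    left
    simp
  have hup : Tendsto (fun ε : ℝ => rTilde ((x:ℂ) + ε * I))
      (nhdsWithin 0 (Set.Ioi 0)) (nhds (-Complex.log a)) := by
    exact (hF_up.clog ha_slit).neg
  have hdn : Tendsto (fun ε : ℝ => rTilde ((x:ℂ) - ε * I))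
      (nhdsWithin 0 (Set.Ioi 0)) (nhds (-Complex.log (2 + (t:ℂ) * I))) := by
    exact (hF_dn.clog hb_slit).neg
  -- final value computation
  have hconj : (starRingEnd ℂ) a = 2 + (t:ℂ) * I := by
    rw [ha_def]
    simp [Complex.conj_I, map_ofNat]
  have harg : a.arg ≠ Real.pi := by
    intro h
    have := Complex.arg_eq_pi_iff.mp h
    have : a.re < 0 := this.1
    rw [ha_def] at this
    simp at this
    linarith
  have habsa : ‖a‖ ^ 2 = 4 + t ^ 2 := by
    rw [Complex.sq_norm, Complex.normSq_apply, ha_def]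
    simp
    ring
  have ht2 : 4 + t ^ 2 = (x * (1 - x))⁻¹ := by
    rw [ht_def, div_pow, hs_sq]
    field_simp
    ring
  have hval : -Complex.log a + -Complex.log (2 + (t:ℂ) * I)
      = ((Real.log (x * (1 - x)) : ℝ) : ℂ) := by
    rw [← hconj, Complex.log_conj a harg, ← neg_add, Complex.add_conj, Complex.log_re]
    have h2 : 2 * Real.log ‖a‖ = Real.log (‖a‖ ^ 2) := by
      rw [Real.log_pow]; push_cast; ring
    rw [h2, habsa, ht2, Real.log_inv]
    push_cast
    ring
  rw [← hval]
  exact hup.add hdn
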